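/- Let f : ℕ → ℝ satisfy f(0) = 1, f(k) ≥ 0 for all k, and f(k) ≤ Σ_{r=1}^{k} 2·catalan(r−1)·f(k−r) for every k ≥ 1. Then f(k) ≤ 4^k for every natural number k. -/

import Mathlib

lemma two_catalan_add_centralBinom (m : ℕ) :
    2 * catalan m + Nat.centralBinom (m + 1) = 4 * Nat.centralBinom m := by
  have h1 := succ_mul_catalan_eq_centralBinom m
  have h2 := Nat.succ_mul_centralBinom_succ m
  have : (m + 1) * (2 * catalan m + Nat.centralBinom (m + 1)) =
      (m + 1) * (4 * Nat.centralBinom m) := by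
    have : (m + 1) * Nat.centralBinom (m + 1) = 2 * (2 * m + 1) * Nat.centralBinom m := h2
    nlinarith [h1, h2]
  exact Nat.eq_of_mul_eq_mul_left (Nat.succ_pos m) this

lemma catalan_partial_sum (m : ℕ) :
    ∑ n ∈ Finset.range m, (catalan n : ℝ) / 4 ^ n =
      2 - 2 * (Nat.centralBinom m : ℝ) / 4 ^ m := by
  induction m with
  | zero => simp [Nat.centralBinom_zero]
  | succ m ih =>
    rw [Finset.sum_range_succ, ih]
    have h : (2 * catalan m + Nat.centralBinom (m + 1) : ℝ) =
        4 * Nat.centralBinom m := by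
      exact_mod_cast congrArg (Nat.cast : ℕ → ℝ) (two_catalan_add_centralBinom m)
    have h4 : (4 : ℝ) ^ m ≠ 0 := by positivity
    rw [pow_succ]
    field_simp
    linear_combination 2 * h

theorem le_four_pow_of_catalan_rec (f : ℕ → ℝ) (h0 : f 0 = 1) (hnonneg : ∀ k, 0 ≤ f k)
    (hrec : ∀ k, 1 ≤ k →
      f k ≤ ∑ r ∈ Finset.Icc 1 k, 2 * (catalan (r - 1) : ℝ) * f (k - r)) :
    ∀ k, f k ≤ 4 ^ k := by
  intro k
  induction k using Nat.strong_induction_on with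
  | _ k ih =>
    rcases Nat.eq_zero_or_pos k with rfl | hk
    · simp [h0]
    · calc f k ≤ ∑ r ∈ Finset.Icc 1 k, 2 * (catalan (r - 1) : ℝ) * f (k - r) := hrec k hk
        _ ≤ ∑ r ∈ Finset.Icc 1 k, 2 * (catalan (r - 1) : ℝ) * 4 ^ (k - r) := by
            apply Finset.sum_le_sum
            intro r hr
            rw [Finset.mem_Icc] at hr
            have : k - r < k := Nat.sub_lt hk hr.1
            have := ih _ this
            have hc : (0:ℝ) ≤ 2 * (catalan (r-1) : ℝ) := by positivity
            nlinarith
        _ = ∑ n ∈ Finset.range k, 2 * (catalan n : ℝ) * 4 ^ (k - 1 - n) := by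
            rw [← Finset.Ico_add_one_right_eq_Icc, Finset.sum_Ico_eq_sum_range]
            apply Finset.sum_congr (by simp)
            intro n hn
            have h1 : 1 + n - 1 = n := by omega
            have h2 : k - (1 + n) = k - 1 - n := by omega
            rw [h1, h2]
        _ = 2 * 4 ^ (k - 1) * ∑ n ∈ Finset.range k, (catalan n : ℝ) / 4 ^ n := by
            rw [Finset.mul_sum]
            apply Finset.sum_congr rfl
            intro n hn
            rw [Finset.mem_range] at hn
            have hle : n ≤ k - 1 := by omega
            have : (4:ℝ) ^ (k - 1 - n) = 4 ^ (k-1) / 4 ^ n := by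
              rw [eq_div_iff (by positivity), ← pow_add]
              congr 1
              omega
            rw [this]
            ring
        _ ≤ 2 * 4 ^ (k - 1) * 2 := by
            rw [catalan_partial_sum]
            have hcb : (0:ℝ) ≤ 2 * (Nat.centralBinom k : ℝ) / 4 ^ k := by positivity
            have : (2:ℝ) - 2 * (Nat.centralBinom k : ℝ) / 4 ^ k ≤ 2 := by linarith
            have hp : (0:ℝ) ≤ 2 * 4 ^ (k-1) := by positivity
            nlinarith
        _ = 4 ^ k := by
            have hk1 : (4:ℝ) ^ k = 4 ^ (k - 1) * 4 := by
              rw [← pow_succ]; congr 1; omega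
            rw [hk1]; ring
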